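/- Let p be a word over the alphabet {x, x^R, y, y^R} and let G(p) be the graph on vertex set {x, x^R, y, y^R} with an edge between a^R and b (where (x)^R := x^R, (x^R)^R := x, etc.) whenever ab is a length-2 factor of p. Then some instance of p (the image of p under a non-erasing morphism h: {x,y}* → {0,1}* extended by h(x^R) = h(x)^R, h(y^R) = h(y)^R) is a factor of (01)^ω if and only if G(p) is bipartite (equivalently, 2-colorable). -/

import Mathlib

def IsFactor {α : Type*} (u : List α) (w : ℕ → α) : Prop :=
  ∃ i, u = (List.range u.length).map fun j => w (i + j)

def alt : ℕ → Fin 2 := fun n => if n % 2 = 0 then 0 else 1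

/-- The pattern alphabet `{x, x^R, y, y^R}`. -/
inductive PatSym | x | xR | y | yR
deriving DecidableEq

/-- The involution `a ↦ a^R` on the pattern alphabet. -/
def PatSym.rev : PatSym → PatSym
  | .x => .xR | .xR => .x | .y => .yR | .yR => .y

/-- Image of a pattern letter under the reversal-respecting morphism determined
by `hx = h(x)`, `hy = h(y)`. -/
def PatSym.img (hx hy : List (Fin 2)) : PatSym → List (Fin 2)
  | .x => hx | .xR => hx.reverse | .y => hy | .yR => hy.reverse

/-- The adjacency relation of the graph `G(p)`: an edge joins `a^R` and `b`
whenever `ab` is a length-2 factor of `p` (symmetrized; loops allowed). -/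
def Adj (p : List PatSym) (a b : PatSym) : Prop :=
  ∃ c d : PatSym, [c, d] <:+: p ∧ ((c.rev = a ∧ d = b) ∨ (c.rev = b ∧ d = a))

lemma alt_succ_ne (n : ℕ) : alt n ≠ alt (n + 1) := by
  simp only [alt]
  rcases Nat.mod_two_eq_zero_or_one n with h | h <;> simp [h, Nat.add_mod]

lemma fin2_unique {a b c : Fin 2} (h1 : a ≠ b) (h2 : c ≠ b) : a = c := by
  revert a b c; decide

lemma alt_val (a : Fin 2) : alt a.val = a := by
  fin_cases a <;> rfl

lemma isFactor_iff_chain (u : List (Fin 2)) :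
    IsFactor u alt ↔ u.IsChain (· ≠ ·) := by
  constructor
  · rintro ⟨i, hi⟩
    have hg : ∀ (k : ℕ) (hk : k < u.length), u[k] = alt (i + k) := by
      intro k hk
      have h1 : u[k]? = some (alt (i + k)) := by
        conv_lhs => rw [hi]
        simp [List.getElem?_map, List.getElem?_range hk]
      rw [List.getElem?_eq_getElem hk] at h1
      exact Option.some_injective _ h1
    rw [List.isChain_iff_getElem]
    intro j hj
    simp only [List.get_eq_getElem, hg]
    have := alt_succ_ne (i + j)
    simpa [Nat.add_assoc] using this
  · intro hch
    cases u with
    | nil => exact ⟨0, rfl⟩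
    | cons a l =>
      refine ⟨(a : Fin 2).val, ?_⟩
      have key : ∀ (k : ℕ) (hk : k < (a :: l).length),
          (a :: l)[k] = alt (a.val + k) := by
        intro k
        induction k with
        | zero => intro hk; simpa using (alt_val a).symm
        | succ n ih =>
          intro hk
          have hn : n < (a :: l).length := Nat.lt_of_succ_lt hk
          have h1 := (List.isChain_iff_getElem.mp hch) n (by
            simp only [List.length_cons] at hk ⊢
            omega)
          have h2 := alt_succ_ne (a.val + n)
          have h3 := ih hn
          rw [h3] at h1
          rw [← Nat.add_assoc]
          exact fin2_unique (Ne.symm h1) (Ne.symm h2)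
      refine List.ext_getElem (by simp) ?_
      intro n h1 h2
      rw [key n h1]
      simp

lemma img_rev (hx hy : List (Fin 2)) (s : PatSym) :
    PatSym.img hx hy s.rev = (PatSym.img hx hy s).reverse := by
  cases s <;> simp [PatSym.rev, PatSym.img]

lemma img_ne (hx hy : List (Fin 2)) (hx0 : hx ≠ []) (hy0 : hy ≠ []) (s : PatSym) :
    PatSym.img hx hy s ≠ [] := by
  cases s <;> simp [PatSym.img, hx0, hy0]

/-- An instance of the pattern `p` occurs in `(01)^ω` iff the graph `G(p)` is
bipartite (has a proper 2-coloring). -/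
theorem stmt11 (p : List PatSym) :
    (∃ hx hy : List (Fin 2), hx ≠ [] ∧ hy ≠ [] ∧
        IsFactor (p.flatMap (PatSym.img hx hy)) alt) ↔
      (∃ c : PatSym → Fin 2, ∀ a b : PatSym, Adj p a b → c a ≠ c b) := by
  constructor
  · rintro ⟨hx, hy, hx0, hy0, hfac⟩
    set f := PatSym.img hx hy with hf
    have hch : (p.flatMap f).IsChain (· ≠ ·) := (isFactor_iff_chain _).mp hfac
    have hne : ∀ s, f s ≠ [] := img_ne hx hy hx0 hy0
    refine ⟨fun a => ((f a).head?).getD 0, ?_⟩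
    rintro a b ⟨cc, dd, hinf, hcase⟩
    obtain ⟨s, t, hst⟩ := hinf
    have hbind : (f cc ++ f dd) <:+: p.flatMap f := by
      refine ⟨s.flatMap f, t.flatMap f, ?_⟩
      rw [← hst]
      simp [List.flatMap_append, List.flatMap_cons]
    have hch2 : (f cc ++ f dd).IsChain (· ≠ ·) := hch.infix hbind
    obtain ⟨u, hu⟩ : ∃ u, (f cc).getLast? = some u := by
      cases h : (f cc).getLast? with
      | none => exact absurd (List.getLast?_eq_none_iff.mp h) (hne cc)
      | some u => exact ⟨u, rfl⟩
    obtain ⟨v, hv⟩ : ∃ v, (f dd).head? = some v := by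
      cases h : (f dd).head? with
      | none => exact absurd (List.head?_eq_none_iff.mp h) (hne dd)
      | some v => exact ⟨v, rfl⟩
    have huv : u ≠ v := (List.isChain_append.mp hch2).2.2 u hu v hv
    have hrev : (f cc.rev).head? = some u := by
      rw [hf, img_rev, List.head?_reverse, ← hf, hu]
    rcases hcase with ⟨ha, hb⟩ | ⟨ha, hb⟩
    · subst ha; subst hb
      simpa [hrev, hv] using huv
    · subst ha; subst hb
      simpa [hrev, hv] using huv.symm
  · rintro ⟨c, hcol⟩
    classical
    set hx : List (Fin 2) :=
      if c .x = c .xR then [c .x] else [c .x, c .xR] with hhx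
    set hy : List (Fin 2) :=
      if c .y = c .yR then [c .y] else [c .y, c .yR] with hhy
    set f := PatSym.img hx hy with hf
    have hx0 : hx ≠ [] := by rw [hhx]; split <;> simp
    have hy0 : hy ≠ [] := by rw [hhy]; split <;> simp
    have hne : ∀ s, f s ≠ [] := img_ne hx hy hx0 hy0
    have hchx : hx.IsChain (· ≠ ·) := by
      by_cases h : c .x = c .xR
      · rw [hhx, if_pos h]; simp
      · rw [hhx, if_neg h]; simpa using h
    have hchxR : hx.reverse.IsChain (· ≠ ·) := by
      by_cases h : c .x = c .xR
      · rw [hhx, if_pos h]; simp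
      · rw [hhx, if_neg h]; simp only [List.reverse_cons, List.reverse_nil,
          List.nil_append, List.cons_append, List.isChain_cons_cons, List.isChain_singleton,
          and_true]
        exact fun e => h e.symm
    have hchy : hy.IsChain (· ≠ ·) := by
      by_cases h : c .y = c .yR
      · rw [hhy, if_pos h]; simp
      · rw [hhy, if_neg h]; simpa using h
    have hchyR : hy.reverse.IsChain (· ≠ ·) := by
      by_cases h : c .y = c .yR
      · rw [hhy, if_pos h]; simp
      · rw [hhy, if_neg h]; simp only [List.reverse_cons, List.reverse_nil,
          List.nil_append, List.cons_append, List.isChain_cons_cons, List.isChain_singleton,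
          and_true]
        exact fun e => h e.symm
    have hchs : ∀ s, (f s).IsChain (· ≠ ·) := by
      intro s
      cases s
      · exact hchx
      · exact hchxR
      · exact hchy
      · exact hchyR
    have hheadx : hx.head? = some (c .x) := by
      by_cases h : c .x = c .xR <;> rw [hhx] <;> simp [h]
    have hlastx : hx.getLast? = some (c .xR) := by
      by_cases h : c .x = c .xR <;> rw [hhx] <;> simp [h]
    have hheady : hy.head? = some (c .y) := by
      by_cases h : c .y = c .yR <;> rw [hhy] <;> simp [h]
    have hlasty : hy.getLast? = some (c .yR) := by
      by_cases h : c .y = c .yR <;> rw [hhy] <;> simp [h]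
    have hhead : ∀ s, (f s).head? = some (c s) := by
      intro s
      cases s
      · exact hheadx
      · rw [hf]; show hx.reverse.head? = _; rw [List.head?_reverse]; exact hlastx
      · exact hheady
      · rw [hf]; show hy.reverse.head? = _; rw [List.head?_reverse]; exact hlasty
    have hlast : ∀ s, (f s).getLast? = some (c s.rev) := by
      intro s
      have h := hhead s.rev
      rw [hf, img_rev, List.head?_reverse] at h
      exact h
    have hmain : ∀ q : List PatSym, (∀ cc dd, [cc, dd] <:+: q →
        c cc.rev ≠ c dd) → (q.flatMap f).IsChain (· ≠ ·) := by
      intro q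
      induction q with
      | nil => intro _; simp
      | cons a rest ih =>
        intro hq
        have hstep : (a :: rest).flatMap f = f a ++ rest.flatMap f :=
          List.flatMap_cons (x := a) (xs := rest) (f := f)
        rw [hstep, List.isChain_append]
        refine ⟨hchs a, ih (fun cc dd h => hq cc dd (List.infix_cons h)), ?_⟩
        intro u hu v hv
        cases rest with
        | nil => simp at hv
        | cons b rest' =>
          have hstep2 : (b :: rest').flatMap f = f b ++ rest'.flatMap f :=
            List.flatMap_cons (x := b) (xs := rest') (f := f)
          rw [hstep2, List.head?_append, hhead b] at hv
          simp only [Option.some_or] at hv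
          rw [hlast a] at hu
          have hinf : [a, b] <:+: a :: b :: rest' := ⟨[], rest', rfl⟩
          have hne' := hq a b hinf
          simp only [Option.mem_def, Option.some.injEq] at hu hv
          rw [hu, hv] at hne'
          exact hne'
    refine ⟨hx, hy, hx0, hy0, (isFactor_iff_chain _).mpr ?_⟩
    exact hmain p (fun cc dd h => hcol cc.rev dd ⟨cc, dd, h, Or.inl ⟨rfl, rfl⟩⟩)
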